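/- arXiv:1804.01224 — 2 statements merged into one kernel-verified Lean document; each statement's English description precedes it below -/
import Mathlib

section
/- Let θ be an irrational number whose continued fraction partial quotients are bounded by B (i.e., θ is badly approximable: there is c > 0 with |θ - p/q| ≥ c/q^2 for all rationals p/q). Then there is a constant C(θ) such that for all n ≥ 1, the maximal gap g_n of the points {θ}, {2θ}, ..., {nθ} on the circle R/Z satisfies n·g_n ≤ C(θ); equivalently sup_n n·M_n^θ < ∞ where M_n^θ = max_y min_{1 ≤ k ≤ n} d(y, {kθ}). -/
open Set

private lemma dirichlet' (ξ : ℝ) (N : ℕ) (hN : 1 ≤ N) :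
    ∃ q : ℕ, 1 ≤ q ∧ q ≤ N ∧ ∃ p : ℤ, |(q : ℝ) * ξ - p| ≤ 1 / (N + 1) := by
  obtain ⟨j, k, hk0, hkN, h⟩ := Real.exists_int_int_abs_mul_sub_le ξ (show 0 < N by omega)
  refine ⟨k.toNat, by omega, by omega, j, ?_⟩
  have hcast : ((k.toNat : ℕ) : ℝ) = (k : ℝ) := by
    exact_mod_cast congrArg (fun z : ℤ => (z : ℝ)) (Int.toNat_of_nonneg hk0.le)
  rw [hcast]
  exact h


private lemma circle_lift (y x : ℝ) (hy0 : 0 ≤ y) (hy1 : y ≤ 1) (p : ℤ) :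
    min |y - Int.fract x| (1 - |y - Int.fract x|) ≤ |y - x + p| := by
  set f := Int.fract x with hf
  have hf0 : 0 ≤ f := Int.fract_nonneg x
  have hf1 : f < 1 := Int.fract_lt_one x
  set a := |y - f| with ha
  have ha0 : 0 ≤ a := abs_nonneg _
  have ha1 : a ≤ 1 := abs_le.2 ⟨by linarith, by linarith⟩
  set d := |y - x + p| with hd
  have hd0 : 0 ≤ d := abs_nonneg _
  rcases le_or_gt (1/2) d with hcase | hcase
  · have : min a (1 - a) ≤ 1/2 := by
      rcases le_total a (1/2) with h | h
      · exact le_trans (min_le_left _ _) h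
      · exact le_trans (min_le_right _ _) (by linarith)
    linarith
  · set t := y - x + p with ht
    have htd : |t| < 1/2 := hcase
    have habs := abs_lt.mp htd
    set z : ℤ := ⌊x⌋ - p with hz
    have hyf : y - f = t + (z : ℝ) := by
      have hfx : f = x - ⌊x⌋ := by rw [hf, Int.fract]
      rw [hfx, ht, hz]
      push_cast
      ring
    have hz1 : z = -1 ∨ z = 0 ∨ z = 1 := by
      have hzr : |(z : ℝ)| < 3/2 := by
        have : (z : ℝ) = (y - f) - t := by rw [hyf]; ring
        rw [this]
        have h1 : |y - f| ≤ 1 := ha1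
        calc |(y - f) - t| ≤ |y - f| + |t| := abs_sub _ _
          _ < 1 + 1/2 := by have := abs_lt.mp htd; rw [abs_sub_comm] at *; linarith [abs_nonneg (y-f)]
          _ = 3/2 := by norm_num
      have h1 : (z : ℝ) < 3/2 := (abs_lt.mp hzr).2
      have h2 : (-3/2 : ℝ) < z := by linarith [(abs_lt.mp hzr).1]
      have h3 : z < 2 := by
        have : (z : ℝ) < (2 : ℤ) := by push_cast; linarith
        exact_mod_cast this
      have h4 : (-2 : ℤ) < z := by
        have : ((-2 : ℤ) : ℝ) < z := by push_cast; linarith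
        exact_mod_cast this
      omega
    rcases hz1 with h | h | h
    · -- z = -1 : y - f = t - 1, a = |t - 1| = 1 - t, 1 - a = t ≤ |t| = d
      have hyf' : y - f = t - 1 := by rw [hyf, h]; push_cast; ring
      have haval : a = 1 - t := by rw [ha, hyf', abs_of_nonpos (by linarith)]; ring
      have : 1 - a ≤ d := by rw [haval, hd]; rcases abs_cases t with ⟨h1,_⟩|⟨h1,_⟩ <;> linarith
      exact le_trans (min_le_right _ _) this
    · -- z = 0 : a = |t| = d
      have hyf' : y - f = t := by rw [hyf, h]; push_cast; ring
      have : a = d := by rw [ha, hyf', hd]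
      exact this ▸ min_le_left a (1 - a)
    · -- z = 1 : y - f = t + 1, a = t + 1, 1 - a = -t ≤ |t| = d
      have hyf' : y - f = t + 1 := by rw [hyf, h]; push_cast; ring
      have haval : a = t + 1 := by rw [ha, hyf', abs_of_nonneg (by linarith)]
      have : 1 - a ≤ d := by rw [haval, hd]; rcases abs_cases t with ⟨h1,_⟩|⟨h1,_⟩ <;> linarith
      exact le_trans (min_le_right _ _) this

set_option maxHeartbeats 1000000 in
private lemma key (θ c : ℝ) (hc : 0 < c)
    (hba : ∀ q : ℕ, 1 ≤ q → ∀ p : ℤ, c / q ≤ |(q : ℝ) * θ - p|) (n : ℕ) :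
    1 ≤ n → ∀ y : ℝ, ∃ k : ℕ, 1 ≤ k ∧ k ≤ n ∧ ∃ p : ℤ,
      |y - ((k : ℝ) * θ - p)| ≤ (2 / c + 2) / n := by
  induction n using Nat.strong_induction_on with
  | _ n IH =>
  intro hn y
  set C : ℝ := 2 / c + 2 with hCdef
  clear_value C
  have hc2 : 0 < 2 / c := by positivity
  have hC2 : (2:ℝ) < C := by rw [hCdef]; linarith
  have hCc : 2 / c < C := by rw [hCdef]; linarith
  have hC0 : 0 < C := by linarith
  have hn0 : (0:ℝ) < n := by exact_mod_cast hn
  by_cases hsmall : (n : ℝ) ≤ 2 * C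
  · refine ⟨1, le_refl 1, hn, round (θ - y), ?_⟩
    have heq : y - (((1:ℕ):ℝ) * θ - (round (θ - y) : ℤ)) = -((θ - y) - round (θ - y)) := by
      push_cast; ring
    rw [heq, abs_neg]
    calc |(θ - y) - round (θ - y)| ≤ 1/2 := abs_sub_round _
      _ ≤ C / n := by rw [le_div_iff₀ hn0]; linarith
  · push_neg at hsmall
    by_contra hcon
    push_neg at hcon
    -- hcon : ∀ k, 1 ≤ k → k ≤ n → ∀ p, C / n < |y - (k θ - p)|
    have hn5 : 5 ≤ n := by
      have h4 : (4:ℝ) < n := by linarith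
      have : 4 < n := by exact_mod_cast h4
      omega
    -- existence of q₀ with small ‖q₀θ‖
    obtain ⟨q₀, hq₀1, hq₀N, p₀', hp₀'⟩ := dirichlet' θ (n / 2) (by omega)
    have hNn : (n : ℝ) < 2 * ((n / 2 : ℕ) + 1) := by
      have : n < 2 * (n / 2 + 1) := by omega
      exact_mod_cast this
    have hNpos : (0:ℝ) < ((n / 2 : ℕ) : ℝ) + 1 := by positivity
    have hq₀small : |(q₀:ℝ) * θ - p₀'| < 2 * C / n := by
      refine lt_of_le_of_lt hp₀' ?_
      rw [div_lt_div_iff₀ hNpos hn0]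
      nlinarith
    classical
    have hex : ∃ q : ℕ, 1 ≤ q ∧ ∃ p : ℤ, |(q:ℝ) * θ - p| < 2 * C / n :=
      ⟨q₀, hq₀1, p₀', hq₀small⟩
    set q := Nat.find hex with hqdef
    clear_value q
    have hq1 : 1 ≤ q := by rw [hqdef]; exact (Nat.find_spec hex).1
    obtain ⟨p₀, hδlt'⟩ : ∃ p : ℤ, |(q:ℝ) * θ - p| < 2 * C / n := by
      rw [hqdef]; exact (Nat.find_spec hex).2
    have hqle : q ≤ n / 2 := by
      rw [hqdef]; exact le_trans (Nat.find_le ⟨hq₀1, p₀', hq₀small⟩) hq₀N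
    have hqmin : ∀ q' : ℕ, q' < q → 1 ≤ q' → ∀ pp : ℤ, 2 * C / n ≤ |(q':ℝ) * θ - pp| := by
      intro q' hlt h1 pp
      by_contra hlt2
      push_neg at hlt2
      exact absurd ⟨h1, pp, hlt2⟩ (Nat.find_min hex (hqdef ▸ hlt))
    clear hqdef hex hq₀small
    have hq0 : (0:ℝ) < q := by exact_mod_cast hq1
    set ε : ℝ := (q:ℝ) * θ - p₀ with hεdef
    clear_value ε
    set δ : ℝ := |ε| with hδdef
    clear_value δ
    have hδlt : δ < 2 * C / n := hδlt'
    have hδlt2 : δ < 2 * (C / n) := by rw [← mul_div_assoc]; exact hδlt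
    have hδc : c / q ≤ δ := by rw [hδdef, hεdef]; exact hba q hq1 p₀
    have hδ0 : 0 < δ := lt_of_lt_of_le (by positivity) hδc
    have hε0 : ε ≠ 0 := by
      intro h; rw [hδdef, h, abs_zero] at hδ0; exact lt_irrefl 0 hδ0
    -- m and n'
    set m := n / (2 * q) with hmdef
    clear_value m
    set n' := n - m * q with hn'def
    clear_value n'
    have h2q : 2 * q ≤ n := by omega
    have hm1 : 1 ≤ m := by
      rw [hmdef]; exact (Nat.le_div_iff_mul_le (by omega)).mpr (by omega)
    have hmq : m * (2 * q) ≤ n := by rw [hmdef]; exact Nat.div_mul_le_self n (2 * q)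
    have hmq2 : 2 * (m * q) ≤ n := by nlinarith [hmq]
    have hmq1 : 1 ≤ m * q := Nat.one_le_iff_ne_zero.mpr (by positivity)
    have hn'lt : n' < n := by omega
    have hn'1 : 1 ≤ n' := by omega
    have hmq2r : 2 * ((m:ℝ) * q) ≤ n := by exact_mod_cast hmq2
    have hn'r : (n' : ℝ) = (n:ℝ) - m * q := by
      rw [hn'def]; push_cast [Nat.cast_sub (by omega : m * q ≤ n)]; ring
    have hn'half : (n:ℝ) / 2 ≤ n' := by rw [hn'r]; linarith
    have hn'0 : (0:ℝ) < n' := by exact_mod_cast hn'1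
    -- division/mod bound for m
    have hdm : n < 2 * q * m + 2 * q := by
      have h1 : 2 * q * m + n % (2 * q) = n := by rw [hmdef]; exact Nat.div_add_mod n (2 * q)
      have h2 : n % (2 * q) < 2 * q := Nat.mod_lt n (by omega)
      omega
    have hdmr : (n:ℝ) < 2 * q * m + 2 * q := by exact_mod_cast hdm
    -- apply IH at the chain center
    obtain ⟨k, hk1, hkn', p, hkp⟩ := IH n' hn'lt hn'1 (y - m * ε / 2)
    rw [hCdef] at hkp  -- hkp uses (2/c+2); convert back
    rw [← hCdef] at hkp
    set s : ℝ := (k:ℝ) * θ - p with hsdef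
    clear_value s
    have hkp' : |y - m * ε / 2 - s| ≤ C / n' := hkp
    -- the chain around y is far from all orbit points up to level n'? No: contradiction route
    have hfar : (m:ℝ) * δ / 2 + C / n ≤ |y - m * ε / 2 - s| := by
      by_contra hclose
      push_neg at hclose
      set t : ℝ := (y - s) / ε with htdef
      clear_value t
      have hts : t * ε = y - s := by rw [htdef]; exact div_mul_cancel₀ _ hε0
      have habs : |t - m / 2| * δ < m * δ / 2 + C / n := by
        have heq2 : y - m * ε / 2 - s = (t - m / 2) * ε := by
          rw [sub_mul, hts]; ring
        rw [heq2, abs_mul, ← hδdef] at hclose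
        exact hclose
      set ρ : ℝ := (C / n) / δ with hρdef
      clear_value ρ
      have hρhalf : 1 / 2 < ρ := by
        rw [hρdef, lt_div_iff₀ hδ0]
        linarith [hδlt2]
      have ht2 : |t - m / 2| < m / 2 + ρ := by
        have h1 : |t - m / 2| < (m * δ / 2 + C / n) / δ := (lt_div_iff₀ hδ0).mpr habs
        have h2 : (m * δ / 2 + C / n) / δ = m / 2 + ρ := by
          rw [hρdef]; field_simp
        rwa [h2] at h1
      have htb := abs_lt.mp ht2
      have hm0r : (0:ℝ) ≤ m := Nat.cast_nonneg m
      have htlow : -ρ < t := by linarith [htb.1]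
      have hthigh : t < m + ρ := by linarith [htb.2]
      set j : ℤ := max 0 (min (m : ℤ) (round t)) with hjdef
      clear_value j
      have hj0 : 0 ≤ j := by rw [hjdef]; exact le_max_left _ _
      have hjm : j ≤ (m : ℤ) := by
        rw [hjdef]; exact max_le (by exact_mod_cast Nat.zero_le m) (min_le_left _ _)
      have hr := abs_le.mp (abs_sub_round t)
      have hjt : |t - (j : ℝ)| < ρ := by
        rcases le_or_gt 0 (round t) with h0 | h0
        · rcases le_or_gt (round t) (m : ℤ) with hm' | hm'
          · have hj : j = round t := by rw [hjdef, min_eq_right hm', max_eq_right h0]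
            rw [hj]
            calc |t - (round t : ℝ)| ≤ 1 / 2 := abs_sub_round t
              _ < ρ := hρhalf
          · have hj : j = (m : ℤ) := by
              rw [hjdef, min_eq_left hm'.le, max_eq_right (by exact_mod_cast Nat.zero_le m)]
            have hm'' : (m : ℝ) + 1 ≤ (round t : ℝ) := by exact_mod_cast hm'
            have htm : (m : ℝ) + 1 / 2 ≤ t := by linarith [hr.1]
            rw [hj]
            push_cast
            rw [abs_of_nonneg (by linarith)]
            linarith
        · have hj : j = 0 := by
            rw [hjdef, max_eq_left (le_trans (min_le_right _ _) h0.le)]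
          have h0' : (round t : ℝ) ≤ -1 := by
            have : round t ≤ -1 := by omega
            exact_mod_cast this
          have htneg : t ≤ -1 / 2 := by linarith [hr.2]
          rw [hj]
          push_cast
          rw [sub_zero, abs_of_nonpos (by linarith)]
          linarith
      have hjnat : ((j.toNat : ℕ) : ℝ) = (j : ℝ) := by
        exact_mod_cast congrArg (fun z : ℤ => (z : ℝ)) (Int.toNat_of_nonneg hj0)
      have hjm' : j.toNat ≤ m := by omega
      set K : ℕ := k + j.toNat * q with hKdef
      clear_value K
      have hK1 : 1 ≤ K := by omega
      have hjq : j.toNat * q ≤ m * q := Nat.mul_le_mul_right q hjm'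
      have hKn : K ≤ n := by omega
      have hKr : ((K : ℕ) : ℝ) = (k : ℝ) + (j : ℝ) * q := by
        rw [hKdef]; push_cast [hjnat]; ring
      have hpt : y - ((K : ℝ) * θ - ((p + j * p₀ : ℤ) : ℝ)) = (t - j) * ε := by
        rw [hKr, sub_mul, hts, hsdef, hεdef]
        push_cast
        ring
      have hsmalldist : |y - ((K : ℝ) * θ - ((p + j * p₀ : ℤ) : ℝ))| < C / n := by
        rw [hpt, abs_mul, ← hδdef]
        have h1 : |t - (j : ℝ)| * δ < ρ * δ := mul_lt_mul_of_pos_right hjt hδ0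
        have hρδ : ρ * δ = C / n := by
          rw [hρdef]; exact div_mul_cancel₀ _ hδ0.ne'
        linarith
      exact absurd hsmalldist (not_lt.mpr (hcon K hK1 hKn (p + j * p₀)).le)
    -- combine chain bound with IH bound
    have hchain : (m:ℝ) * δ / 2 + C / n ≤ C / n' := le_trans hfar hkp'
    have hCn' : C / n' ≤ 2 * (C / n) := by
      rw [← mul_div_assoc, div_le_div_iff₀ hn'0 hn0]
      nlinarith [hn'half, hC0]
    have hmδ : (m:ℝ) * δ ≤ 2 * (C / n) := by linarith
    have hq2b : c * (n:ℝ)^2 < 8 * C * (q:ℝ)^2 := by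
      have h1 : ((n:ℝ) / (2 * q) - 1) * δ ≤ m * δ := by
        apply mul_le_mul_of_nonneg_right _ hδ0.le
        rw [sub_le_iff_le_add, div_le_iff₀ (by positivity : (0:ℝ) < 2 * (q:ℝ))]
        nlinarith [hdmr]
      have h2 : (n:ℝ) * (c / q) / (2 * q) ≤ n * δ / (2 * q) := by
        gcongr
      have h3 : (n:ℝ) * (c / q) / (2 * q) = c * n / (2 * q^2) := by
        field_simp
      have h4 : c * (n:ℝ) / (2 * q^2) - δ ≤ 2 * (C / n) := by
        calc c * (n:ℝ) / (2 * q^2) - δ = n * (c / q) / (2 * q) - δ := by rw [h3]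
          _ ≤ n * δ / (2 * q) - δ := by linarith
          _ = ((n:ℝ) / (2 * q) - 1) * δ := by ring
          _ ≤ m * δ := h1
          _ ≤ 2 * (C / n) := hmδ
      have h5 : c * (n:ℝ) / (2 * q^2) < 4 * (C / n) := by linarith [hδlt2]
      rw [← mul_div_assoc, div_lt_div_iff₀ (by positivity : (0:ℝ) < 2 * (q:ℝ)^2) hn0] at h5
      nlinarith [h5]
    rcases Nat.lt_or_ge q 2 with hqc | hqc
    · have hq1' : q = 1 := by omega
      have hqr : (q:ℝ) = 1 := by rw [hq1']; norm_num
      rw [hqr] at hq2b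
      have h1 : 4 * C^2 < (n:ℝ)^2 := by
        linarith only [mul_lt_mul'' hsmall hsmall (by positivity : (0:ℝ) ≤ 2 * C) (by positivity : (0:ℝ) ≤ 2 * C)]
      have h2 : 2 < c * C := by
        have h := (div_lt_iff₀ hc).mp hCc
        linarith only [h]
      have e1 : c * (4 * C^2) < c * (n:ℝ)^2 := by
        have h := mul_lt_mul_of_pos_left h1 hc
        linarith only [h]
      have e2 : c * (4 * C^2) < 8 * C := by linarith only [hq2b, e1]
      have e3 : 2 * C < c * C * C := mul_lt_mul_of_pos_right h2 hC0
      linarith only [e2, e3]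
    · obtain ⟨q', hq'1, hq'le, p', hp'⟩ := dirichlet' θ (q - 1) (by omega)
      have h2r : 2 * C / n ≤ |(q':ℝ) * θ - p'| := hqmin q' (by omega) hq'1 p'
      have hcast : ((q - 1 : ℕ):ℝ) + 1 = (q:ℝ) := by
        push_cast [Nat.cast_sub (show 1 ≤ q by omega)]; ring
      rw [hcast] at hp'
      have hqub : 2 * C / n ≤ 1 / q := le_trans h2r hp'
      have hq_ub : 2 * C * q ≤ n := by
        rw [div_le_div_iff₀ hn0 hq0] at hqub; linarith
      have h1 : 4 * C^2 * (q:ℝ)^2 ≤ (n:ℝ)^2 := by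
        linarith only [mul_le_mul hq_ub hq_ub (by positivity : (0:ℝ) ≤ 2 * C * q) hn0.le]
      have h2 : 2 < c * C := by
        have h := (div_lt_iff₀ hc).mp hCc
        linarith only [h]
      have e1 : c * (4 * C^2 * (q:ℝ)^2) ≤ c * (n:ℝ)^2 :=
        mul_le_mul_of_nonneg_left h1 hc.le
      have e3 : 2 * (C * (q:ℝ)^2) < (c * C) * (C * (q:ℝ)^2) := by
        apply mul_lt_mul_of_pos_right h2
        positivity
      linarith only [e1, e3, hq2b]

/-- If `θ` is badly approximable (there is `c > 0` with `c/q ≤ |qθ - p|` for all positive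
integers `q` and integers `p`), then there is a constant `C` such that for all `n ≥ 1`,
every point `y` of the circle is within `C/n` (in the circle metric) of one of the points
`{θ}, {2θ}, …, {nθ}`; i.e. `sup_n n · M_n^θ < ∞`. -/
theorem badly_approximable_gap_bound
    (θ : ℝ) (c : ℝ) (hc : 0 < c)
    (hba : ∀ q : ℕ, 1 ≤ q → ∀ p : ℤ, c / q ≤ |(q : ℝ) * θ - p|) :
    ∃ C : ℝ, ∀ n : ℕ, 1 ≤ n → ∀ y ∈ Icc (0:ℝ) 1, ∃ k : Fin n,
      min |y - Int.fract (((k : ℕ) + 1) * θ)| (1 - |y - Int.fract (((k : ℕ) + 1) * θ)|)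
        ≤ C / n := by
  refine ⟨2 / c + 2, ?_⟩
  intro n hn y hy
  obtain ⟨k, hk1, hkn, p, hkp⟩ := key θ c hc hba n hn y
  refine ⟨⟨k - 1, by omega⟩, ?_⟩
  have hx : (((⟨k - 1, by omega⟩ : Fin n) : ℕ) : ℝ) + 1 = (k : ℝ) := by
    have : ((⟨k - 1, by omega⟩ : Fin n) : ℕ) = k - 1 := rfl
    rw [this]
    have h2 : ((k - 1 : ℕ) : ℝ) = (k : ℝ) - 1 := by
      push_cast [Nat.cast_sub hk1]
      ring
    rw [h2]; ring
  rw [hx]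
  have hlift := circle_lift y ((k : ℝ) * θ) hy.1 hy.2 p
  have heq : y - (k : ℝ) * θ + p = y - ((k : ℝ) * θ - p) := by ring
  rw [heq] at hlift
  exact le_trans hlift hkp
end

section
/- Let X_1, X_2, ... be i.i.d. uniform on [0,1] and for each n let g_n(ω) denote the maximal gap determined by X_1(ω),...,X_n(ω) together with the endpoints 0 and 1. Then for any fixed L > 0, P(g_n ≥ L/n) ≤ (n+1)·(1 - L/(2n))^n for n ≥ 2L; in particular P(n·g_n ≥ 4·ln n) → 0 as n → ∞. -/
/-!
An interval of length `2h` inside `[0,1]` contains a whole cell `[jh, (j+1)h]` of the grid of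
mesh `h`, and if `(n+1)h ≥ 1` at most `n+1` such cells lie in `[0,1]`. Each cell misses all `n`
uniform points with probability `(1-h)^n`, so a union bound over the cells with `h = L/(2n)` gives
the estimate; when `(n+1)h < 1` the right-hand side is at least `1` by Bernoulli's inequality.
For `L = 4 log n` the bound is `(n+1)(1 - 2 log n / n)^n ≤ (n+1)/n² → 0`.
-/

open Set MeasureTheory ProbabilityTheory Filter

/-- The event that the maximal gap of the sample `(X k)_{k ∈ s}`, endpoints `0` and `1`
included, is at least `ℓ`. -/
def gapEvent {Ω ι : Type*} (X : ι → Ω → ℝ) (s : Finset ι) (ℓ : ℝ) : Set Ω :=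
  {ω | ∃ u v : ℝ, 0 ≤ u ∧ v ≤ 1 ∧ ℓ ≤ v - u ∧ ∀ k ∈ s, X k ω ∉ Ioo u v}

lemma exists_grid_cell_between {h u v : ℝ} (hh : 0 < h) (hu : 0 ≤ u) (huv : 2 * h ≤ v - u) :
    ∃ j : ℕ, u ≤ j * h ∧ (j + 1) * h ≤ v := by
  refine ⟨⌈u / h⌉₊, (div_le_iff₀ hh).mp (Nat.le_ceil _), ?_⟩
  have hceil : (⌈u / h⌉₊ : ℝ) * h < u + h := by
    have := Nat.ceil_lt_add_one (div_nonneg hu hh.le)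
    calc (⌈u / h⌉₊ : ℝ) * h < (u / h + 1) * h := by gcongr
      _ = u + h := by field_simp
  linarith

lemma one_le_succ_mul_one_sub_pow {h : ℝ} {n : ℕ} (hnh : (n + 1) * h ≤ 1) :
    1 ≤ (n + 1) * (1 - h) ^ n := by
  have hbernoulli : 1 + n * -h ≤ (1 + -h) ^ n := one_add_mul_le_pow (by nlinarith) n
  rw [← sub_eq_add_neg] at hbernoulli
  nlinarith

lemma two_mul_log_le_self {x : ℝ} (hx : 0 ≤ x) : 2 * Real.log x ≤ x := by
  rcases hx.eq_or_lt with rfl | hx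
  · simp
  have hsqrt := Real.log_le_sub_one_of_pos (Real.sqrt_pos.mpr hx)
  rw [Real.log_sqrt hx.le] at hsqrt
  nlinarith [Real.sq_sqrt hx.le, sq_nonneg (√x - 2)]

lemma succ_mul_one_sub_log_div_pow_le {n : ℕ} (hn : 1 ≤ n) :
    (n + 1) * (1 - 2 * Real.log n / n) ^ n ≤ 2 / n := by
  have hn0 : (0 : ℝ) < n := by exact_mod_cast hn
  have hexp : (1 - 2 * Real.log n / n) ^ n ≤ ((n : ℝ) ^ 2)⁻¹ := by
    calc (1 - 2 * Real.log n / n) ^ n ≤ Real.exp (-(2 * Real.log n)) :=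
          Real.one_sub_div_pow_le_exp_neg (two_mul_log_le_self hn0.le)
      _ = ((n : ℝ) ^ 2)⁻¹ := by
          rw [Real.exp_neg, ← Real.log_rpow hn0, Real.exp_log (by positivity), Real.rpow_two]
  calc (n + 1) * (1 - 2 * Real.log n / n) ^ n ≤ (n + 1) * ((n : ℝ) ^ 2)⁻¹ := by gcongr
    _ ≤ 2 / n := by
      rw [← div_eq_mul_inv, div_le_div_iff₀ (by positivity) hn0]
      have : (1 : ℝ) ≤ n := by exact_mod_cast hn
      nlinarith

section UniformSample

variable {Ω ι : Type*} [MeasureSpace Ω] {X : ι → Ω → ℝ}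

lemma measure_preimage_compl_Ioo_of_map_eq_uniform {Y : Ω → ℝ}
    (hY : Measure.map Y ℙ = (volume : Measure ℝ).restrict (Icc 0 1))
    {a b : ℝ} (ha : 0 ≤ a) (hab : a ≤ b) (hb : b ≤ 1) :
    ℙ (Y ⁻¹' (Ioo a b)ᶜ) = ENNReal.ofReal (1 - (b - a)) := by
  have hYm : AEMeasurable Y ℙ := AEMeasurable.of_map_ne_zero (by simp [hY])
  have hsub : Ioo a b ⊆ Icc 0 1 := fun x hx => ⟨ha.trans hx.1.le, hx.2.le.trans hb⟩
  rw [← Measure.map_apply₀ hYm measurableSet_Ioo.compl.nullMeasurableSet, hY,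
    Measure.restrict_apply measurableSet_Ioo.compl, inter_comm, ← sdiff_eq,
    measure_sdiff hsub measurableSet_Ioo.nullMeasurableSet (by simp),
    Real.volume_Icc, Real.volume_Ioo, ← ENNReal.ofReal_sub _ (by linarith)]
  norm_num

lemma measure_forall_notMem_Ioo (hindep : iIndepFun X ℙ)
    (hunif : ∀ k, Measure.map (X k) ℙ = (volume : Measure ℝ).restrict (Icc 0 1))
    (s : Finset ι) {a b : ℝ} (ha : 0 ≤ a) (hab : a ≤ b) (hb : b ≤ 1) :
    ℙ {ω | ∀ k ∈ s, X k ω ∉ Ioo a b} = ENNReal.ofReal ((1 - (b - a)) ^ s.card) := by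
  have hset : {ω | ∀ k ∈ s, X k ω ∉ Ioo a b} = ⋂ k ∈ s, X k ⁻¹' (Ioo a b)ᶜ := by
    ext; simp
  rw [hset, hindep.measure_inter_preimage_eq_mul s (fun _ _ => measurableSet_Ioo.compl),
    Finset.prod_congr rfl fun k _ =>
      measure_preimage_compl_Ioo_of_map_eq_uniform (hunif k) ha hab hb,
    Finset.prod_const, ENNReal.ofReal_pow (by linarith)]

lemma measure_gapEvent_le_of_one_le_mul (hindep : iIndepFun X ℙ)
    (hunif : ∀ k, Measure.map (X k) ℙ = (volume : Measure ℝ).restrict (Icc 0 1))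
    (s : Finset ι) {h : ℝ} {N : ℕ} (hN : 1 ≤ N * h) :
    ℙ (gapEvent X s (2 * h)) ≤ N * ENNReal.ofReal ((1 - h) ^ s.card) := by
  classical
  have hh : 0 < h := pos_of_mul_pos_right (one_pos.trans_le hN) N.cast_nonneg
  set cells := (Finset.range N).filter fun j : ℕ => ((j : ℝ) + 1) * h ≤ 1
  have hcover : gapEvent X s (2 * h) ⊆
      ⋃ j ∈ cells, {ω | ∀ k ∈ s, X k ω ∉ Ioo (j * h) ((j + 1) * h)} := by
    rintro ω ⟨u, v, hu, hv, huv, hω⟩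
    obtain ⟨j, hju, hjv⟩ := exists_grid_cell_between hh hu huv
    have hj1 : ((j : ℝ) + 1) * h ≤ 1 := hjv.trans hv
    have hjN : j < N := by
      have : ((j : ℝ) + 1) ≤ N := le_of_mul_le_mul_right (hj1.trans hN) hh
      exact_mod_cast this
    refine mem_biUnion (Finset.mem_filter.mpr ⟨Finset.mem_range.mpr hjN, hj1⟩) ?_
    exact fun k hk hx => hω k hk ⟨hju.trans_lt hx.1, hx.2.trans_le hjv⟩
  calc ℙ (gapEvent X s (2 * h))
      ≤ ∑ j ∈ cells, ℙ {ω | ∀ k ∈ s, X k ω ∉ Ioo (j * h) ((j + 1) * h)} :=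
        (measure_mono hcover).trans (measure_biUnion_finset_le _ _)
    _ = ∑ _j ∈ cells, ENNReal.ofReal ((1 - h) ^ s.card) := by
        refine Finset.sum_congr rfl fun j hj => ?_
        rw [measure_forall_notMem_Ioo hindep hunif s (by positivity) (by linarith)
          (Finset.mem_filter.mp hj).2, add_one_mul, add_sub_cancel_left]
    _ ≤ N * ENNReal.ofReal ((1 - h) ^ s.card) := by
        rw [Finset.sum_const, nsmul_eq_mul]
        gcongr
        exact_mod_cast (Finset.card_filter_le _ _).trans_eq (Finset.card_range N)

end UniformSample

theorem measure_gapEvent_le {Ω : Type*} [MeasureSpace Ω] [IsProbabilityMeasure (ℙ : Measure Ω)]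
    {X : ℕ → Ω → ℝ} (hindep : iIndepFun X ℙ)
    (hunif : ∀ k, Measure.map (X k) ℙ = (volume : Measure ℝ).restrict (Icc 0 1))
    (n : ℕ) (L : ℝ) :
    ℙ (gapEvent X (Finset.range n) (L / n))
      ≤ ENNReal.ofReal ((n + 1) * (1 - L / (2 * n)) ^ n) := by
  set h := L / (2 * n)
  by_cases hN : 1 ≤ ((n + 1 : ℕ) : ℝ) * h
  · have hLn : L / n = 2 * h := by ring
    calc ℙ (gapEvent X (Finset.range n) (L / n))
        ≤ (n + 1 : ℕ) * ENNReal.ofReal ((1 - h) ^ n) := by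
          simpa [hLn] using measure_gapEvent_le_of_one_le_mul hindep hunif (Finset.range n) hN
      _ = ENNReal.ofReal ((n + 1) * (1 - h) ^ n) := by
          rw [ENNReal.ofReal_mul (by positivity), ← Nat.cast_add_one, ENNReal.ofReal_natCast]
  · push_cast at hN
    exact prob_le_one.trans (ENNReal.one_le_ofReal.mpr (one_le_succ_mul_one_sub_pow (by linarith)))

theorem iid_uniform_max_gap_bound_general
    {Ω : Type*} [MeasureSpace Ω] [IsProbabilityMeasure (ℙ : Measure Ω)]
    (X : ℕ → Ω → ℝ)
    (hindep : iIndepFun X ℙ)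
    (hunif : ∀ k, Measure.map (X k) ℙ = (volume : Measure ℝ).restrict (Icc 0 1)) :
    (∀ (n : ℕ) (L : ℝ), 0 < L → 2 * L ≤ n →
      ℙ {ω | ∃ u v : ℝ, 0 ≤ u ∧ v ≤ 1 ∧ L / n ≤ v - u ∧
          ∀ k ∈ Finset.range n, X k ω ∉ Ioo u v}
        ≤ ENNReal.ofReal (((n : ℝ) + 1) * (1 - L / (2 * n)) ^ n)) ∧
    Tendsto (fun n : ℕ => ℙ {ω | ∃ u v : ℝ, 0 ≤ u ∧ v ≤ 1 ∧ 4 * Real.log n / n ≤ v - u ∧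
          ∀ k ∈ Finset.range n, X k ω ∉ Ioo u v}) atTop (nhds 0) := by
  refine ⟨fun n L _ _ => measure_gapEvent_le hindep hunif n L, ?_⟩
  have hlim : Tendsto (fun n : ℕ => ENNReal.ofReal (2 / n)) atTop (nhds 0) := by
    simpa using ENNReal.tendsto_ofReal (tendsto_const_div_atTop_nhds_zero_nat 2)
  refine tendsto_of_tendsto_of_tendsto_of_le_of_le' tendsto_const_nhds hlim
    (Eventually.of_forall fun _ => zero_le) ?_
  filter_upwards [eventually_ge_atTop 1] with n hn
  calc ℙ (gapEvent X (Finset.range n) (4 * Real.log n / n))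
      ≤ ENNReal.ofReal ((n + 1) * (1 - 4 * Real.log n / (2 * n)) ^ n) :=
        measure_gapEvent_le hindep hunif n _
    _ ≤ ENNReal.ofReal (2 / n) := by
        rw [show 4 * Real.log n / (2 * n) = 2 * Real.log n / n by ring]
        exact ENNReal.ofReal_le_ofReal (succ_mul_one_sub_log_div_pow_le hn)

/-- For i.i.d. uniform points on `[0,1]`, the maximal gap `g_n` (of the sorted points
together with the endpoints `0,1`) satisfies `P(g_n ≥ L/n) ≤ (n+1)(1 - L/(2n))^n` for
`n ≥ 2L`; in particular `P(n g_n ≥ 4 log n) → 0`.  Here the event `g_n ≥ L/n` is expressed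
as the existence of a subinterval of `[0,1]` of length at least `L/n` whose interior
contains none of the first `n` sample points. -/
theorem iid_uniform_max_gap_bound
    {Ω : Type*} [MeasureSpace Ω] [IsProbabilityMeasure (ℙ : Measure Ω)]
    (X : ℕ → Ω → ℝ)
    (hmeas : ∀ k, Measurable (X k))
    (hindep : iIndepFun X ℙ)
    (hunif : ∀ k, Measure.map (X k) ℙ = (volume : Measure ℝ).restrict (Icc 0 1)) :
    (∀ (n : ℕ) (L : ℝ), 0 < L → 2 * L ≤ n →
      ℙ {ω | ∃ u v : ℝ, 0 ≤ u ∧ v ≤ 1 ∧ L / n ≤ v - u ∧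
          ∀ k ∈ Finset.range n, X k ω ∉ Ioo u v}
        ≤ ENNReal.ofReal (((n : ℝ) + 1) * (1 - L / (2 * n)) ^ n)) ∧
    Tendsto (fun n : ℕ => ℙ {ω | ∃ u v : ℝ, 0 ≤ u ∧ v ≤ 1 ∧ 4 * Real.log n / n ≤ v - u ∧
          ∀ k ∈ Finset.range n, X k ω ∉ Ioo u v}) atTop (nhds 0) :=
  iid_uniform_max_gap_bound_general X hindep hunif
end
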